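/- arXiv:2501.09293 — 2 statements merged into one kernel-verified Lean document; each statement's English description precedes it below -/
import Mathlib

section
/- Every doubly stochastic matrix A ∈ ℝ^{N×N} can be written as a convex combination A = ∑_{i=1}^{k} c_i P_i of permutation matrices P_i, with c_i ∈ (0,1], ∑ c_i = 1, and k ≤ N² - 2N + 2. -/
open Finset Matrix

/-- The subspace of square matrices all of whose row sums and column sums vanish. -/
def zeroSumSubmodule (N : ℕ) : Submodule ℝ (Matrix (Fin N) (Fin N) ℝ) where
  carrier := {M | (∀ i, ∑ j, M i j = 0) ∧ (∀ j, ∑ i, M i j = 0)}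
  add_mem' := by
    intro a b ha hb
    refine ⟨fun i => ?_, fun j => ?_⟩
    · simp [Matrix.add_apply, Finset.sum_add_distrib, ha.1 i, hb.1 i]
    · simp [Matrix.add_apply, Finset.sum_add_distrib, ha.2 j, hb.2 j]
  zero_mem' := by simp
  smul_mem' := by
    intro c a ha
    refine ⟨fun i => ?_, fun j => ?_⟩
    · simp [Matrix.smul_apply, ← Finset.mul_sum, ha.1 i]
    · simp [Matrix.smul_apply, ← Finset.mul_sum, ha.2 j]

lemma finrank_zeroSumSubmodule_le (m : ℕ) :
    Module.finrank ℝ (zeroSumSubmodule (m + 1)) ≤ m ^ 2 := by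
  -- restriction to the top-left m × m block is injective on this subspace
  let f : zeroSumSubmodule (m + 1) →ₗ[ℝ] Matrix (Fin m) (Fin m) ℝ :=
    { toFun := fun M => Matrix.of fun i j => (M : Matrix (Fin (m+1)) (Fin (m+1)) ℝ) i.castSucc j.castSucc
      map_add' := by intros; rfl
      map_smul' := by intros; rfl }
  have hf : Function.Injective f := by
    rw [← LinearMap.ker_eq_bot, LinearMap.ker_eq_bot']
    intro M hM
    obtain ⟨hr, hc⟩ := M.2
    have h1 : ∀ (i j : Fin m), (M : Matrix (Fin (m+1)) (Fin (m+1)) ℝ) i.castSucc j.castSucc = 0 := by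
      intro i j
      have := congrFun (congrFun hM i) j
      exact this
    have h2 : ∀ i : Fin m, (M : Matrix (Fin (m+1)) (Fin (m+1)) ℝ) i.castSucc (Fin.last m) = 0 := by
      intro i
      have := hr i.castSucc
      rwa [Fin.sum_univ_castSucc, Finset.sum_eq_zero (fun j _ => h1 i j), zero_add] at this
    have h3 : ∀ j : Fin m, (M : Matrix (Fin (m+1)) (Fin (m+1)) ℝ) (Fin.last m) j.castSucc = 0 := by
      intro j
      have := hc j.castSucc
      rwa [Fin.sum_univ_castSucc, Finset.sum_eq_zero (fun i _ => h1 i j), zero_add] at this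
    have h4 : (M : Matrix (Fin (m+1)) (Fin (m+1)) ℝ) (Fin.last m) (Fin.last m) = 0 := by
      have := hr (Fin.last m)
      rwa [Fin.sum_univ_castSucc, Finset.sum_eq_zero (fun j _ => h3 j), zero_add] at this
    ext i j
    refine Fin.lastCases ?_ ?_ i
    · exact Fin.lastCases h4 (fun j' => h3 j') j
    · intro i'
      exact Fin.lastCases (h2 i') (fun j' => h1 i' j') j
  calc Module.finrank ℝ (zeroSumSubmodule (m + 1))
      ≤ Module.finrank ℝ (Matrix (Fin m) (Fin m) ℝ) := LinearMap.finrank_le_finrank_of_injective hf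
    _ = m ^ 2 := by simp [Module.finrank_matrix, sq]

/-- Birkhoff–von Neumann theorem with the bound k ≤ N² - 2N + 2 on the number
of permutation matrices. -/
theorem birkhoff_von_neumann_with_bound (N : ℕ) (A : Matrix (Fin N) (Fin N) ℝ)
    (hnn : ∀ i j, 0 ≤ A i j)
    (hrow : ∀ i, ∑ j, A i j = 1)
    (hcol : ∀ j, ∑ i, A i j = 1) :
    ∃ (k : ℕ) (c : Fin k → ℝ) (σ : Fin k → Equiv.Perm (Fin N)),
      k ≤ N ^ 2 - 2 * N + 2 ∧
      (∀ u, c u ∈ Set.Ioc (0 : ℝ) 1) ∧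
      (∑ u, c u = 1) ∧
      A = ∑ u, c u • (σ u).permMatrix ℝ := by
  obtain _ | m := N
  · -- N = 0 : everything is trivial
    refine ⟨1, fun _ => 1, fun _ => 1, by norm_num, by norm_num, by simp, ?_⟩
    ext i j
    exact i.elim0
  -- A is doubly stochastic, hence in the convex hull of permutation matrices
  have hds : A ∈ doublyStochastic ℝ (Fin (m + 1)) :=
    mem_doublyStochastic_iff_sum.mpr ⟨hnn, hrow, hcol⟩
  have hA : A ∈ convexHull ℝ {σ.permMatrix ℝ | σ : Equiv.Perm (Fin (m + 1))} := by
    rw [← doublyStochastic_eq_convexHull_permMatrix]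
    exact hds
  obtain ⟨ι, hfin, z, w, hzs, hzind, hwpos, hwsum, hzsum⟩ :=
    eq_pos_convex_span_of_mem_convexHull hA
  letI : Fintype ι := hfin
  haveI : Nonempty ι := by
    by_contra h
    rw [not_nonempty_iff] at h
    rw [Finset.univ_eq_empty, Finset.sum_empty] at hwsum
    norm_num at hwsum
  -- cardinality bound via dimension of the zero-sum subspace
  have hspan : vectorSpan ℝ (Set.range z) ≤ zeroSumSubmodule (m + 1) := by
    rw [vectorSpan_def, Submodule.span_le]
    rintro v ⟨x, hx, y, hy, rfl⟩
    obtain ⟨σx, rfl⟩ := hzs hx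
    obtain ⟨σy, rfl⟩ := hzs hy
    have hxd := permMatrix_mem_doublyStochastic (R := ℝ) (σ := σx)
    have hyd := permMatrix_mem_doublyStochastic (R := ℝ) (σ := σy)
    refine ⟨fun i => ?_, fun j => ?_⟩
    · simp only [vsub_eq_sub, Matrix.sub_apply, Finset.sum_sub_distrib,
        sum_row_of_mem_doublyStochastic hxd, sum_row_of_mem_doublyStochastic hyd, sub_self]
    · simp only [vsub_eq_sub, Matrix.sub_apply, Finset.sum_sub_distrib,
        sum_col_of_mem_doublyStochastic hxd, sum_col_of_mem_doublyStochastic hyd, sub_self]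
  have hcard : Fintype.card ι ≤ (m + 1) ^ 2 - 2 * (m + 1) + 2 := by
    have h1 : Module.finrank ℝ (vectorSpan ℝ (Set.range z)) + 1 = Fintype.card ι :=
      hzind.finrank_vectorSpan_add_one
    have h2 : Module.finrank ℝ (vectorSpan ℝ (Set.range z)) ≤
        Module.finrank ℝ (zeroSumSubmodule (m + 1)) := Submodule.finrank_mono hspan
    have h3 := finrank_zeroSumSubmodule_le m
    have h4 : Fintype.card ι ≤ m ^ 2 + 1 := by omega
    have h5 : (m + 1) ^ 2 = m ^ 2 + 2 * m + 1 := by ring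
    have h6 : 2 * (m + 1) = 2 * m + 2 := by ring
    omega
  -- reindex by Fin k
  obtain ⟨k, ⟨e⟩⟩ : ∃ k : ℕ, Nonempty (Fin k ≃ ι) := ⟨Fintype.card ι, ⟨(Fintype.equivFin ι).symm⟩⟩
  have hk : k ≤ (m + 1) ^ 2 - 2 * (m + 1) + 2 := by
    rwa [← Fintype.card_fin k, Fintype.card_congr e]
  have hσ : ∀ u : Fin k, ∃ σ : Equiv.Perm (Fin (m + 1)), σ.permMatrix ℝ = z (e u) := fun u =>
    hzs ⟨e u, rfl⟩
  choose σ hσ using hσ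
  refine ⟨k, fun u => w (e u), σ, hk, ?_, ?_, ?_⟩
  · intro u
    refine ⟨hwpos (e u), ?_⟩
    calc w (e u) ≤ ∑ i, w i :=
          Finset.single_le_sum (fun i _ => (hwpos i).le) (Finset.mem_univ _)
      _ = 1 := hwsum
  · rw [Equiv.sum_comp e w]; exact hwsum
  · rw [← hzsum, ← Equiv.sum_comp e (fun i => w i • z i)]
    exact Finset.sum_congr rfl fun u _ => by rw [hσ u]
end

section
/- Every doubly stochastic matrix is a convex combination of permutation matrices. -/
/-- Birkhoff–von Neumann theorem (existence form): every doubly stochastic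
matrix is a convex combination of permutation matrices. -/
theorem birkhoff_von_neumann (N : ℕ) (A : Matrix (Fin N) (Fin N) ℝ)
    (hnn : ∀ i j, 0 ≤ A i j)
    (hrow : ∀ i, ∑ j, A i j = 1)
    (hcol : ∀ j, ∑ i, A i j = 1) :
    ∃ (k : ℕ) (c : Fin k → ℝ) (σ : Fin k → Equiv.Perm (Fin N)),
      (∀ u, 0 ≤ c u) ∧
      (∑ u, c u = 1) ∧
      A = ∑ u, c u • (σ u).permMatrix ℝ := by
  have hA : A ∈ doublyStochastic ℝ (Fin N) := by
    rw [mem_doublyStochastic_iff_sum]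
    exact ⟨hnn, hrow, hcol⟩
  obtain ⟨w, hw0, hw1, hwA⟩ := exists_eq_sum_perm_of_mem_doublyStochastic hA
  let e := (Fintype.equivFin (Equiv.Perm (Fin N))).symm
  refine ⟨Fintype.card (Equiv.Perm (Fin N)), w ∘ e, e, fun u => hw0 _, ?_, ?_⟩
  · rw [← hw1]; exact (Equiv.sum_comp e w)
  · rw [← hwA]; exact (Equiv.sum_comp e fun σ => w σ • σ.permMatrix ℝ).symm
end
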